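/- Let e ≥ 1 be an integer and let k be a positive integer. If e < 3, assume gcd(k, 3·2^{e−1}) = 1; then D_k(u, 1) = u for all u ∈ ℤ/2^eℤ if and only if k ≡ 1 or k ≡ −1 (mod 3·2^{e−1}). If e ≥ 3, assume gcd(k, 3·2^{e−2}) = 1; then D_k(u, 1) = u for all u ∈ ℤ/2^eℤ if and only if k ≡ 1 or k ≡ −1 (mod 3·2^{e−2}). -/

import Mathlib

open Polynomial

set_option linter.unusedSectionVars false
set_option maxHeartbeats 1000000
section Helpers
variable {S : Type*} [CommRing S]

lemma pow_two_pow_one_add (c j : ℕ) (t : S) :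
    ∃ t', (1 + 2 ^ (c + 2) * t) ^ 2 ^ j = 1 + 2 ^ (c + 2 + j) * t' := by
  induction j with
  | zero => exact ⟨t, by norm_num⟩
  | succ j ih =>
    obtain ⟨t', h⟩ := ih
    refine ⟨t' + 2 ^ (c + 1 + j) * t' ^ 2, ?_⟩
    have h2 : (1 + 2 ^ (c + 2) * t) ^ 2 ^ (j + 1)
        = ((1 + 2 ^ (c + 2) * t) ^ 2 ^ j) ^ 2 := by
      rw [show (2:ℕ) ^ (j+1) = 2 ^ j * 2 from pow_succ 2 j, pow_mul]
    rw [h2, h]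
    ring

lemma pow_two_pow_one_add' (c j : ℕ) (t : S) :
    ∃ s, (1 + 2 ^ (c + 2) * t) ^ 2 ^ j
      = 1 + 2 ^ (c + 2 + j) * t + 2 ^ (c + 3 + j) * s := by
  induction j with
  | zero => exact ⟨0, by norm_num⟩
  | succ j ih =>
    obtain ⟨s, h⟩ := ih
    refine ⟨s + 2 ^ (c + j) * (t + 2 * s) ^ 2, ?_⟩
    have h2 : (1 + 2 ^ (c + 2) * t) ^ 2 ^ (j + 1)
        = ((1 + 2 ^ (c + 2) * t) ^ 2 ^ j) ^ 2 := by
      rw [show (2:ℕ) ^ (j+1) = 2 ^ j * 2 from pow_succ 2 j, pow_mul]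
    rw [h2, h]
    ring

lemma one_add_sq_zero_pow (a : S) (ha : a ^ 2 = 0) (m : ℕ) :
    (1 + a) ^ m = 1 + (m : S) * a := by
  induction m with
  | zero => simp
  | succ m ih =>
    rw [pow_succ, ih]
    push_cast
    linear_combination (m:S) * ha

lemma one_add_cube_zero_pow (b : S) (hb : b ^ 3 = 0) (m : ℕ) :
    (1 + b) ^ m = 1 + (m : S) * b + (m.choose 2 : S) * b ^ 2 := by
  induction m with
  | zero => simp
  | succ m ih =>
    rw [pow_succ, ih, Nat.choose_succ_succ, Nat.choose_one_right]
    push_cast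
    linear_combination (m.choose 2 : S) * hb

lemma one_add_pow_binom (β : S) (m : ℕ) :
    ∃ r, (1 + β) ^ m = 1 + (m : S) * β + β ^ 2 * r := by
  induction m with
  | zero => exact ⟨0, by norm_num⟩
  | succ m ih =>
    obtain ⟨r, h⟩ := ih
    refine ⟨r + (m : S) + β * r, ?_⟩
    rw [pow_succ, h]
    push_cast
    ring

lemma one_add_four_pow (c : S) (m : ℕ) : ∃ z, (1 + 4 * c) ^ m = 1 + 4 * z := by
  induction m with
  | zero => exact ⟨0, by norm_num⟩
  | succ m ih =>
    obtain ⟨z, h⟩ := ih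
    exact ⟨z + c + 4 * (z * c), by rw [pow_succ, h]; ring⟩

end Helpers

section Engines
variable {S : Type*} [CommRing S]

lemma oddEngine (e₀ : ℕ) (h2 : (2:S) ^ (e₀ + 3) = 0) (w u c : S)
    (hw : w ^ 2 = u * w - 1) (hc : u + 1 = 4 * c ∨ u - 1 = 4 * c) :
    w ^ (3 * 2 ^ (e₀ + 1)) = 1 := by
  rcases hc with hc | hc
  · have h3 : w ^ 3 = 1 + 2 ^ (0 + 2) * (c * ((w - 1) * w)) := by
      linear_combination (w - 1) * hw + ((w ^ 2 - w)) * hc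
    obtain ⟨t', ht⟩ := pow_two_pow_one_add 0 (e₀ + 1) (c * ((w - 1) * w))
    have hsplit : w ^ (3 * 2 ^ (e₀ + 1)) = (w ^ 3) ^ 2 ^ (e₀ + 1) := by
      rw [← pow_mul]
    rw [hsplit, h3, ht, show (0:ℕ) + 2 + (e₀ + 1) = e₀ + 3 by ring, h2]
    ring
  · have h3 : w ^ 3 = -1 + 4 * (c * ((w + 1) * w)) := by
      linear_combination (w + 1) * hw + ((w ^ 2 + w)) * hc
    have h6 : w ^ 6 = 1 + 2 ^ (1 + 2) * (-(c * ((w+1)*w)) + 2 * (c * ((w+1)*w)) ^ 2) := by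
      have hx : w ^ 6 = (w ^ 3) ^ 2 := by ring
      rw [hx, h3]; ring
    obtain ⟨t', ht⟩ := pow_two_pow_one_add 1 e₀ (-(c * ((w+1)*w)) + 2 * (c * ((w+1)*w)) ^ 2)
    have hsplit : w ^ (3 * 2 ^ (e₀ + 1)) = (w ^ 6) ^ 2 ^ e₀ := by
      rw [show 3 * 2 ^ (e₀ + 1) = 6 * 2 ^ e₀ by ring, pow_mul]
    rw [hsplit, h6, ht, show (1:ℕ) + 2 + e₀ = e₀ + 3 by ring, h2]
    ring

lemma evenEngine (e₀ : ℕ) (h2 : (2:S) ^ (e₀ + 4) = 0) (w v : S)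
    (hw : w ^ 2 = 2 * v * w - 1) (hv : 2 ^ (e₀ + 3) * (v ^ 3 - v) = 0)
    (n m n₀ : ℕ) (hn : n = 2 ^ (e₀ + 2) * n₀) (hm : m = n + 2 ∨ n = m + 2) :
    (w ^ n - 1) * (w ^ m - 1) = 0 := by
  have w4 : w ^ 4 = 1 + 2 ^ (0 + 2) * (v * w * (v * w - 1)) := by
    have hx : w ^ 4 = (w ^ 2) ^ 2 := by ring
    rw [hx, hw]; ring
  obtain ⟨s, hq⟩ := pow_two_pow_one_add' 0 e₀ (v * w * (v * w - 1))
  set a := 2 ^ (e₀ + 2) * (v * w * (v * w - 1)) + 2 ^ (e₀ + 3) * s with ha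
  have hqa : w ^ 2 ^ (e₀ + 2) = 1 + a := by
    have h1 : w ^ 2 ^ (e₀ + 2) = (w ^ 4) ^ 2 ^ e₀ := by
      rw [show (2:ℕ) ^ (e₀ + 2) = 4 * 2 ^ e₀ by rw [pow_add]; ring, pow_mul]
    rw [h1, w4, hq, ha]
    ring
  have ha2 : a ^ 2 = 0 := by
    have hx : a ^ 2 = 2 ^ (e₀ + 4) * (2 ^ e₀ * (v * w * (v * w - 1) + 2 * s) ^ 2) := by
      rw [ha]; ring
    rw [hx, h2, zero_mul]
  have hwn : w ^ n = 1 + (n₀ : S) * a := by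
    rw [hn, pow_mul, hqa, one_add_sq_zero_pow a ha2]
  have hkey : a * (2 * (v * w - 1)) = 0 := by
    rw [ha]
    linear_combination (2 ^ (e₀ + 3) * (v ^ 3 * w)) * hw + (w * (2 * v * w - 1)) * hv
      + (s * (v * w - 1)) * h2
  rcases hm with hm | hm
  · have hwm : w ^ m = (1 + (n₀ : S) * a) * w ^ 2 := by
      rw [hm, pow_add, hwn]
    rw [hwm, hwn, hw]
    linear_combination (n₀ : S) * hkey + ((n₀ : S) ^ 2 * (2 * v * w - 1)) * ha2
  · set wb := 2 * v - w with hwbdef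
    have hwb : w * wb = 1 := by rw [hwbdef]; linear_combination (-1 : S) * hw
    have hwb2 : wb ^ 2 = 2 * v * wb - 1 := by rw [hwbdef]; linear_combination hw
    have hkey2 : a * (2 * (v * wb - 1)) = 0 := by
      rw [ha, hwbdef]
      linear_combination (-(2 ^ (e₀ + 3) * (v ^ 3 * w))) * hw + (-w) * hv
        + (s * (v * (2 * v - w) - 1)) * h2
    have hwm : w ^ m = (1 + (n₀ : S) * a) * wb ^ 2 := by
      have h1 : w ^ m * (w * wb) ^ 2 = w ^ n * wb ^ 2 := by
        rw [hm, pow_add]; ring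
      rw [hwb, one_pow, mul_one, hwn] at h1
      exact h1
    rw [hwm, hwn]
    linear_combination (n₀ : S) * hkey2 + ((n₀ : S) ^ 2 * wb ^ 2) * ha2
      + ((n₀ : S) * a) * hwb2

lemma evenEngine3 (h2 : (2:S) ^ 3 = 0) (w v : S) (hw : w ^ 2 = 2 * v * w - 1)
    (n m α β : ℕ) (hn : n = 2 * α) (hm : m = 2 * β) (hab : β = α + 1 ∨ α = β + 1) :
    (w ^ n - 1) * (w ^ m - 1) = 0 := by
  set b := 2 * (v * w - 1) with hb
  have hq : w ^ 2 = 1 + b := by rw [hb]; linear_combination hw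
  have h2b2 : 2 * b ^ 2 = 0 := by
    have hx : 2 * b ^ 2 = 2 ^ 3 * (v * w - 1) ^ 2 := by rw [hb]; ring
    rw [hx, h2, zero_mul]
  have hb3 : b ^ 3 = 0 := by
    have hx : b ^ 3 = 2 ^ 3 * (v * w - 1) ^ 3 := by rw [hb]; ring
    rw [hx, h2, zero_mul]
  have hwn : w ^ n = 1 + (α : S) * b + (α.choose 2 : S) * b ^ 2 := by
    rw [hn, pow_mul, hq, one_add_cube_zero_pow b hb3]
  have hwm : w ^ m = 1 + (β : S) * b + (β.choose 2 : S) * b ^ 2 := by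
    rw [hm, pow_mul, hq, one_add_cube_zero_pow b hb3]
  obtain ⟨t, ht⟩ : ∃ t, α * β = 2 * t := by
    rcases hab with h | h <;> subst h
    · obtain ⟨t, ht⟩ := Nat.even_mul_succ_self α
      exact ⟨t, by omega⟩
    · obtain ⟨t, ht⟩ := Nat.even_mul_succ_self β
      exact ⟨t, by rw [mul_comm]; omega⟩
  rw [hwn, hwm]
  have htS : (α : S) * (β : S) = 2 * (t : S) := by
    have := congrArg (Nat.cast : ℕ → S) ht
    push_cast at this
    exact this
  linear_combination (t : S) * h2b2 + htS * b ^ 2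
    + ((α : S) * (β.choose 2 : S) + (β : S) * (α.choose 2 : S)
       + (α.choose 2 : S) * (β.choose 2 : S) * b) * hb3

end Engines

section Adjoin
variable {R : Type*} [CommRing R] [Nontrivial R]

noncomputable abbrev qpoly (u : R) : R[X] := X ^ 2 + (C (-u) * X + C 1)

lemma qpoly_degree (u : R) : (qpoly u).degree = 2 := by
  unfold qpoly
  have hlt : degree (C (-u) * X + C 1) < degree ((X : R[X]) ^ 2) := by
    rw [degree_X_pow]
    exact lt_of_le_of_lt degree_linear_le (by decide)
  rw [degree_add_eq_left_of_degree_lt hlt, degree_X_pow]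
  rfl

lemma qpoly_monic (u : R) : (qpoly u).Monic := by
  apply (monic_X_pow 2).add_of_left
  rw [degree_X_pow]
  exact lt_of_le_of_lt degree_linear_le (by decide)

lemma adjoin_inj (u : R) :
    Function.Injective (algebraMap R (AdjoinRoot (qpoly u))) := by
  intro r s h
  rw [AdjoinRoot.algebraMap_eq] at h
  have h2 : AdjoinRoot.mk (qpoly u) (C r) = AdjoinRoot.mk (qpoly u) (C s) := h
  have h3 := congrArg (AdjoinRoot.modByMonicHom (qpoly_monic u)) h2
  rw [AdjoinRoot.modByMonicHom_mk, AdjoinRoot.modByMonicHom_mk,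
    (modByMonic_eq_self_iff (qpoly_monic u)).2, (modByMonic_eq_self_iff (qpoly_monic u)).2] at h3
  · exact C_injective h3
  · exact lt_of_le_of_lt degree_C_le (by rw [qpoly_degree]; decide)
  · exact lt_of_le_of_lt degree_C_le (by rw [qpoly_degree]; decide)

lemma qpoly_root_eq (u : R) :
    (AdjoinRoot.root (qpoly u)) ^ 2
      = algebraMap R (AdjoinRoot (qpoly u)) u * AdjoinRoot.root (qpoly u) - 1 := by
  have h := AdjoinRoot.eval₂_root (qpoly u)
  unfold qpoly at h
  simp only [eval₂_add, eval₂_mul, eval₂_pow, eval₂_X, eval₂_C, eval₂_one, eval₂_neg, map_neg, map_one] at h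
  rw [← AdjoinRoot.algebraMap_eq] at h
  linear_combination h

lemma eval_dickson_iff (u : R) (k₀ : ℕ) :
    eval u (dickson 1 1 (k₀ + 1)) = u ↔
      (AdjoinRoot.root (qpoly u) ^ k₀ - 1) * (AdjoinRoot.root (qpoly u) ^ (k₀ + 2) - 1) = 0 := by
  set S := AdjoinRoot (qpoly u)
  set φ := algebraMap R S with hφ
  set w := AdjoinRoot.root (qpoly u) with hwdef
  set wb := φ u - w with hwbdef
  have hw : w ^ 2 = φ u * w - 1 := qpoly_root_eq u
  have hwb : w * wb = 1 := by rw [hwbdef]; linear_combination (-1 : S) * hw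
  have hsum : φ u = w + wb := by rw [hwbdef]; ring
  have heval : φ (eval u (dickson 1 1 (k₀ + 1))) = eval (φ u) (dickson 1 1 (k₀ + 1) : S[X]) := by
    rw [← Polynomial.eval₂_at_apply, ← Polynomial.eval_map, Polynomial.map_dickson, map_one]
  have hdickson : eval (φ u) (dickson 1 1 (k₀ + 1) : S[X]) = w ^ (k₀ + 1) + wb ^ (k₀ + 1) := by
    rw [hsum]
    exact dickson_one_one_eval_add_inv w wb hwb (k₀ + 1)
  have hpow : ∀ i : ℕ, w ^ i * wb ^ i = 1 := by
    intro i; rw [← mul_pow, hwb, one_pow]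
  have hid2 : (w ^ k₀ - 1) * (w ^ (k₀ + 2) - 1)
      = w ^ (k₀ + 1) * (w ^ (k₀ + 1) + wb ^ (k₀ + 1) - (w + wb)) := by
    linear_combination (-1 : S) * hpow (k₀ + 1) + w ^ k₀ * hwb
  constructor
  · intro h
    have h2 : φ (eval u (dickson 1 1 (k₀ + 1))) = φ u := congrArg φ h
    rw [heval, hdickson] at h2
    rw [hid2]
    linear_combination w ^ (k₀ + 1) * h2 + w ^ (k₀ + 1) * hsum
  · intro h
    apply adjoin_inj u
    rw [heval, hdickson]
    have h3 : wb ^ (k₀ + 1) * (w ^ (k₀ + 1) * (w ^ (k₀ + 1) + wb ^ (k₀ + 1) - (w + wb))) = 0 := by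
      rw [← hid2, h, mul_zero]
    have h4 : w ^ (k₀ + 1) + wb ^ (k₀ + 1) - (w + wb) = 0 := by
      calc w ^ (k₀ + 1) + wb ^ (k₀ + 1) - (w + wb)
          = (w ^ (k₀ + 1) * wb ^ (k₀ + 1)) * (w ^ (k₀ + 1) + wb ^ (k₀ + 1) - (w + wb)) := by
            rw [hpow]; ring
        _ = 0 := by linear_combination h3
    rw [hsum]
    linear_combination h4
end Adjoin

section ValBlock
variable {S : Type*} [CommRing S]

lemma val_block (e₀ n' : ℕ) (h2S : (2:S) ^ (e₀ + 3) = 0)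
    (hne : (2:S) ^ (e₀ + 2) ≠ 0) (w : S) (hw : w ^ 2 = 3 * w - 1)
    (hone : (1 + 4 * ((w - 1) * w)) ^ n' = 1) : 2 ^ (e₀ + 1) ∣ n' := by
  rcases Nat.eq_zero_or_pos n' with rfl | hpos
  · exact dvd_zero _
  obtain ⟨j, m, hmodd, hjm⟩ := Nat.exists_eq_two_pow_mul_odd (Nat.pos_iff_ne_zero.mp hpos)
  by_cases hj : e₀ + 1 ≤ j
  · rw [hjm]
    exact (pow_dvd_pow 2 hj).mul_right m
  · exfalso
    push_neg at hj
    obtain ⟨j', rfl⟩ : ∃ j', e₀ = j + j' := ⟨e₀ - j, by omega⟩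
    obtain ⟨s, hs⟩ := pow_two_pow_one_add' 0 j ((w - 1) * w)
    obtain ⟨l, hl⟩ := hmodd
    obtain ⟨r, hr⟩ := one_add_pow_binom
      (2 ^ (0 + 2 + j) * ((w - 1) * w) + 2 ^ (0 + 3 + j) * s) m
    have hbase : (1:S) + 4 * ((w - 1) * w) = 1 + 2 ^ (0 + 2) * ((w - 1) * w) := by norm_num
    have hA : (1:S) + 2 ^ (0 + 2 + j) * ((w - 1) * w) + 2 ^ (0 + 3 + j) * s
        = 1 + (2 ^ (0 + 2 + j) * ((w - 1) * w) + 2 ^ (0 + 3 + j) * s) := by ring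
    have hz := hone
    rw [hjm, pow_mul, hbase, hs, hA, hr] at hz
    have hl' : (m : S) = 2 * (l : S) + 1 := by exact_mod_cast congrArg (Nat.cast : ℕ → S) hl
    rw [hl'] at hz
    have hkill : (2:S) ^ (j + j' + 2) * ((w - 1) * w) = 0 := by
      linear_combination (2 ^ j' : S) * hz
        + (-(((l : S)) * ((w - 1) * w)) - (2 * (l:S) + 1) * s
            - 2 ^ (j + 1) * (((w - 1) * w) + 2 * s) ^ 2 * r) * h2S
    apply hne
    linear_combination (-1 : S) * hkill + (2 ^ (j + j' + 2) : S) * hw + w * h2S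

end ValBlock

section ZModFacts

lemma zmod_cases {M : ℕ} [NeZero M] (u : ZMod M) :
    (∃ v : ZMod M, u = 2 * v) ∨ (∃ c : ZMod M, u + 1 = 4 * c) ∨
      (∃ c : ZMod M, u - 1 = 4 * c) := by
  have hu : ((u.val : ℕ) : ZMod M) = u := ZMod.natCast_zmod_val u
  set n := u.val with hn
  rcases Nat.even_or_odd n with ho | ho
  · left
    refine ⟨((n / 2 : ℕ) : ZMod M), ?_⟩
    rw [← hu]
    have h1 : n = 2 * (n / 2) := by
      have := Nat.even_iff.mp ho; omega
    conv_lhs => rw [h1]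
    push_cast
    ring
  · have ho2 := Nat.odd_iff.mp ho
    have h4 : n % 4 = 1 ∨ n % 4 = 3 := by omega
    rcases h4 with h4 | h4
    · right; right
      refine ⟨((n / 4 : ℕ) : ZMod M), ?_⟩
      rw [← hu]
      have h1 : ((n : ZMod M)) - 1 = ((n - 1 : ℕ) : ZMod M) := by
        rw [Nat.cast_sub (by omega : 1 ≤ n)]
        push_cast
        ring
      rw [h1, show n - 1 = 4 * (n / 4) by omega]
      push_cast
      ring
    · right; left
      refine ⟨((n / 4 + 1 : ℕ) : ZMod M), ?_⟩
      rw [← hu, show ((n:ZMod M) + 1) = ((n + 1 : ℕ) : ZMod M) by push_cast; ring,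
        show n + 1 = 4 * (n / 4 + 1) by omega]
      push_cast
      ring

lemma zmod_cube_even {M : ℕ} [NeZero M] (y : ZMod M) : ∃ q : ZMod M, y ^ 3 - y = 2 * q := by
  have hu : ((y.val : ℕ) : ZMod M) = y := ZMod.natCast_zmod_val y
  set p := y.val
  have h2 : (2:ℤ) ∣ (p:ℤ) ^ 3 - (p:ℤ) := by
    obtain ⟨t, ht⟩ := Int.even_mul_succ_self (p:ℤ)
    exact ⟨t * ((p:ℤ) - 1), by linear_combination ((p:ℤ) - 1) * ht⟩
  obtain ⟨q, hq⟩ := h2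
  refine ⟨((q : ℤ) : ZMod M), ?_⟩
  have h3 := congrArg (Int.cast : ℤ → ZMod M) hq
  push_cast at h3
  rw [hu] at h3
  linear_combination h3

end ZModFacts

section MainLemmas

lemma pow_pos_ne (e₀ : ℕ) : ((2:ℕ) ^ (e₀ + 3)) ≠ 0 := by positivity

lemma fact_one_lt (e : ℕ) (he : 1 ≤ e) : Fact (1 < 2 ^ e) :=
  ⟨by
    have h : (2:ℕ) ^ 0 < 2 ^ e := Nat.pow_lt_pow_right (by norm_num) (by omega)
    simpa using h⟩

lemma char_fact {M : ℕ} (u : ZMod M) (e : ℕ) (hM : M = 2 ^ e) [NeZero M] [Nontrivial (ZMod M)] :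
    (2 : AdjoinRoot (qpoly u)) ^ e = 0 := by
  have h2R : (2 : ZMod M) ^ e = 0 := by
    have h1 : ((2 ^ e : ℕ) : ZMod M) = 0 := by
      rw [← hM]; exact ZMod.natCast_self M
    push_cast at h1
    exact h1
  have h1 := congrArg (algebraMap (ZMod M) (AdjoinRoot (qpoly u))) h2R
  rwa [map_pow, map_ofNat, map_zero] at h1

lemma bwd3 (e₀ k₀ : ℕ) (hN : 3 * 2 ^ (e₀ + 1) ∣ k₀ ∨ 3 * 2 ^ (e₀ + 1) ∣ k₀ + 2)
    (u : ZMod (2 ^ (e₀ + 3))) : eval u (dickson 1 1 (k₀ + 1)) = u := by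
  haveI : NeZero ((2:ℕ) ^ (e₀ + 3)) := ⟨pow_pos_ne e₀⟩
  haveI := fact_one_lt (e₀ + 3) (by omega)
  rw [eval_dickson_iff]
  set φ := algebraMap (ZMod (2 ^ (e₀ + 3))) (AdjoinRoot (qpoly u)) with hφ
  set w := AdjoinRoot.root (qpoly u) with hwdef
  have hw : w ^ 2 = φ u * w - 1 := qpoly_root_eq u
  have h2S : (2 : AdjoinRoot (qpoly u)) ^ (e₀ + 3) = 0 := char_fact u (e₀ + 3) rfl
  rcases zmod_cases u with ⟨y, hy⟩ | ⟨c, hc⟩ | ⟨c, hc⟩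
  · -- even case
    set v := φ y with hv
    have hyu : φ u = 2 * v := by
      have h1 := congrArg φ hy
      rwa [map_mul, map_ofNat] at h1
    have hwv : w ^ 2 = 2 * v * w - 1 := by rw [hyu] at hw; linear_combination hw
    obtain ⟨q, hq⟩ := zmod_cube_even y
    have hq' : v ^ 3 - v = 2 * φ q := by
      have h1 := congrArg φ hq
      rwa [map_sub, map_pow, map_mul, map_ofNat] at h1
    have hvf : (2 : AdjoinRoot (qpoly u)) ^ (e₀ + 2) * (v ^ 3 - v) = 0 := by
      rw [hq']
      calc (2 : AdjoinRoot (qpoly u)) ^ (e₀ + 2) * (2 * φ q)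
          = (2 : AdjoinRoot (qpoly u)) ^ (e₀ + 3) * φ q := by ring
        _ = 0 := by rw [h2S, zero_mul]
    cases e₀ with
    | zero =>
      obtain ⟨α, hα⟩ : ∃ α, k₀ = 2 * α := by
        rcases hN with ⟨d, hd⟩ | ⟨d, hd⟩ <;> exact ⟨k₀ / 2, by omega⟩
      exact evenEngine3 h2S w v hwv k₀ (k₀ + 2) α (α + 1) hα (by omega) (Or.inl rfl)
    | succ e₁ =>
      have h2S' : (2 : AdjoinRoot (qpoly u)) ^ (e₁ + 4) = 0 := h2S
      have hvf' : (2 : AdjoinRoot (qpoly u)) ^ (e₁ + 3) * (v ^ 3 - v) = 0 := hvf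
      rcases hN with ⟨d, hd⟩ | ⟨d, hd⟩
      · exact evenEngine e₁ h2S' w v hwv hvf' k₀ (k₀ + 2) (3 * d)
          (by rw [hd]; ring) (Or.inl rfl)
      · rw [mul_comm]
        exact evenEngine e₁ h2S' w v hwv hvf' (k₀ + 2) k₀ (3 * d)
          (by rw [hd]; ring) (Or.inr rfl)
  · -- odd, u + 1 = 4c
    have hcS : φ u + 1 = 4 * φ c := by
      have h1 := congrArg φ hc
      rwa [map_add, map_one, map_mul, map_ofNat] at h1
    have hord := oddEngine e₀ h2S w (φ u) (φ c) hw (Or.inl hcS)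
    rcases hN with ⟨d, hd⟩ | ⟨d, hd⟩
    · rw [hd, pow_mul, hord, one_pow, sub_self, zero_mul]
    · rw [hd, pow_mul, hord, one_pow, sub_self, mul_zero]
  · -- odd, u - 1 = 4c
    have hcS : φ u - 1 = 4 * φ c := by
      have h1 := congrArg φ hc
      rwa [map_sub, map_one, map_mul, map_ofNat] at h1
    have hord := oddEngine e₀ h2S w (φ u) (φ c) hw (Or.inr hcS)
    rcases hN with ⟨d, hd⟩ | ⟨d, hd⟩
    · rw [hd, pow_mul, hord, one_pow, sub_self, zero_mul]
    · rw [hd, pow_mul, hord, one_pow, sub_self, mul_zero]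

lemma fwd3 (e₀ k₀ : ℕ) (hk3 : ¬ 3 ∣ (k₀ + 1))
    (heval : eval (3 : ZMod (2 ^ (e₀ + 3))) (dickson 1 1 (k₀ + 1)) = 3) :
    3 * 2 ^ (e₀ + 1) ∣ k₀ ∨ 3 * 2 ^ (e₀ + 1) ∣ k₀ + 2 := by
  haveI : NeZero ((2:ℕ) ^ (e₀ + 3)) := ⟨pow_pos_ne e₀⟩
  haveI := fact_one_lt (e₀ + 3) (by omega)
  rw [eval_dickson_iff] at heval
  set φ := algebraMap (ZMod (2 ^ (e₀ + 3))) (AdjoinRoot (qpoly (3 : ZMod (2 ^ (e₀ + 3))))) with hφ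
  set w := AdjoinRoot.root (qpoly (3 : ZMod (2 ^ (e₀ + 3)))) with hwdef
  have hw0 : w ^ 2 = φ 3 * w - 1 := qpoly_root_eq (3 : ZMod (2 ^ (e₀ + 3)))
  have hφ3 : φ 3 = 3 := map_ofNat φ 3
  have hw : w ^ 2 = 3 * w - 1 := by rw [hφ3] at hw0; exact hw0
  have h2S : (2 : AdjoinRoot (qpoly (3 : ZMod (2 ^ (e₀ + 3))))) ^ (e₀ + 3) = 0 :=
    char_fact _ (e₀ + 3) rfl
  have hne : (2 : AdjoinRoot (qpoly (3 : ZMod (2 ^ (e₀ + 3))))) ^ (e₀ + 2) ≠ 0 := by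
    intro h
    have h2 : φ ((2 : ZMod (2 ^ (e₀ + 3))) ^ (e₀ + 2)) = φ 0 := by
      rw [map_pow, map_ofNat, map_zero]; exact h
    have h3 := adjoin_inj _ h2
    have h4 : ((2 ^ (e₀ + 2) : ℕ) : ZMod (2 ^ (e₀ + 3))) = 0 := by push_cast; exact h3
    rw [ZMod.natCast_eq_zero_iff] at h4
    have h5 := Nat.le_of_dvd (by positivity) h4
    have h6 : (2:ℕ) ^ (e₀ + 2) < 2 ^ (e₀ + 3) := Nat.pow_lt_pow_right (by norm_num) (by omega)
    omega
  have h2nil : IsNilpotent (2 : AdjoinRoot (qpoly (3 : ZMod (2 ^ (e₀ + 3))))) := ⟨e₀ + 3, h2S⟩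
  have hUnit : ∀ x y : AdjoinRoot (qpoly (3 : ZMod (2 ^ (e₀ + 3)))),
      IsUnit x → IsUnit (x + 2 * y) := by
    intro x y hx
    obtain ⟨xu, rfl⟩ := hx
    have h1 : IsUnit (((xu : AdjoinRoot (qpoly (3 : ZMod (2 ^ (e₀ + 3))))) + 2 * y) * ↑xu⁻¹) := by
      have h2 : ((xu : AdjoinRoot (qpoly (3 : ZMod (2 ^ (e₀ + 3))))) + 2 * y) * ↑xu⁻¹
          = 1 + 2 * (y * ↑xu⁻¹) := by
        rw [add_mul, Units.mul_inv]
        ring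
      rw [h2]
      exact (((Commute.all _ _).isNilpotent_mul_right h2nil)).isUnit_one_add
    exact isUnit_of_mul_isUnit_left h1
  have hinv : (w - 1) * (w - 2) = 1 := by linear_combination hw
  have hw3 : w ^ 3 = 1 + 4 * ((w - 1) * w) := by linear_combination (w - 1) * hw
  have h3cases : 3 ∣ k₀ ∨ 3 ∣ k₀ + 2 := by omega
  rcases h3cases with hd3 | hd3
  · left
    obtain ⟨n', hn'⟩ := hd3
    obtain ⟨z, hz⟩ := one_add_four_pow ((w - 1) * w) n'
    have e1 : w ^ (k₀ + 2) = (1 + 4 * z) * w ^ 2 := by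
      rw [hn', pow_add w (3*n') 2, pow_mul w 3 n', hw3, hz]
    have e2 : w ^ (k₀ + 2) - 1 = (3 * w - 2) + 2 * (2 * (z * (3 * w - 1))) := by
      rw [e1, hw]; ring
    have h5 : (3 * w - 2) * (7 - 3 * w) = 1 - 6 := by linear_combination (-9 : AdjoinRoot (qpoly (3 : ZMod (2 ^ (e₀ + 3))))) * hw
    have hu6 : IsUnit (1 - (6 : AdjoinRoot (qpoly (3 : ZMod (2 ^ (e₀ + 3)))))) := by
      have h6nil : IsNilpotent (6 : AdjoinRoot (qpoly (3 : ZMod (2 ^ (e₀ + 3))))) := by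
        have h1 := (Commute.all ((2 : AdjoinRoot (qpoly (3 : ZMod (2 ^ (e₀ + 3)))))) 3).isNilpotent_mul_right h2nil
        norm_num at h1
        exact h1
      exact h6nil.isUnit_one_sub
    have hu32 : IsUnit (3 * w - 2) := isUnit_of_mul_isUnit_left (h5 ▸ hu6)
    have hufac : IsUnit (w ^ (k₀ + 2) - 1) := by rw [e2]; exact hUnit _ _ hu32
    have hk : w ^ k₀ = 1 := by
      have h0 := (IsUnit.mul_left_eq_zero hufac).mp heval
      exact sub_eq_zero.mp h0
    have hone : (1 + 4 * ((w - 1) * w)) ^ n' = 1 := by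
      rw [← hw3, ← pow_mul w 3 n', ← hn', hk]
    rw [hn']
    exact mul_dvd_mul_left 3 (val_block e₀ n' h2S hne w hw hone)
  · right
    obtain ⟨n', hn'⟩ := hd3
    obtain ⟨q, hq⟩ : ∃ q, k₀ = 3 * q + 1 := ⟨(k₀ - 1) / 3, by omega⟩
    obtain ⟨z, hz⟩ := one_add_four_pow ((w - 1) * w) q
    have e1 : w ^ k₀ = (1 + 4 * z) * w := by
      rw [hq, pow_add w (3*q) 1, pow_mul w 3 q, hw3, hz, pow_one]
    have e2 : w ^ k₀ - 1 = (w - 1) + 2 * (2 * (z * w)) := by rw [e1]; ring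
    have hu32 : IsUnit (w - 1) := IsUnit.of_mul_eq_one _ hinv
    have hufac : IsUnit (w ^ k₀ - 1) := by rw [e2]; exact hUnit _ _ hu32
    have hk : w ^ (k₀ + 2) = 1 := by
      have h0 : (w ^ (k₀ + 2) - 1) * (w ^ k₀ - 1) = 0 := by rw [mul_comm]; exact heval
      exact sub_eq_zero.mp ((IsUnit.mul_left_eq_zero hufac).mp h0)
    have hone : (1 + 4 * ((w - 1) * w)) ^ n' = 1 := by
      rw [← hw3, ← pow_mul w 3 n', ← hn', hk]
    rw [hn']
    exact mul_dvd_mul_left 3 (val_block e₀ n' h2S hne w hw hone)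

end MainLemmas

section SmallE

lemma bwd2 (k₀ : ℕ) (hN : 6 ∣ k₀ ∨ 6 ∣ k₀ + 2) (u : ZMod (2 ^ 2)) :
    eval u (dickson 1 1 (k₀ + 1)) = u := by
  haveI : NeZero ((2:ℕ) ^ 2) := ⟨by norm_num⟩
  haveI := fact_one_lt 2 (by omega)
  rw [eval_dickson_iff]
  set φ := algebraMap (ZMod (2 ^ 2)) (AdjoinRoot (qpoly u)) with hφ
  set w := AdjoinRoot.root (qpoly u) with hwdef
  have hw : w ^ 2 = φ u * w - 1 := qpoly_root_eq u
  have h2S : (2 : AdjoinRoot (qpoly u)) ^ 2 = 0 := char_fact u 2 rfl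
  have h4S : (4 : AdjoinRoot (qpoly u)) = 0 := by
    have h1 : (4 : AdjoinRoot (qpoly u)) = 2 ^ 2 := by norm_num
    rw [h1, h2S]
  rcases zmod_cases u with ⟨y, hy⟩ | ⟨c, hc⟩ | ⟨c, hc⟩
  · set v := φ y with hv
    have hyu : φ u = 2 * v := by
      have h1 := congrArg φ hy
      rwa [map_mul, map_ofNat] at h1
    have hwv : w ^ 2 = 2 * v * w - 1 := by rw [hyu] at hw; linear_combination hw
    have h2S3 : (2 : AdjoinRoot (qpoly u)) ^ 3 = 0 := by
      calc (2 : AdjoinRoot (qpoly u)) ^ 3 = 2 ^ 2 * 2 := by ring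
        _ = 0 := by rw [h2S, zero_mul]
    obtain ⟨α, hα⟩ : ∃ α, k₀ = 2 * α := by
      rcases hN with ⟨d, hd⟩ | ⟨d, hd⟩ <;> exact ⟨k₀ / 2, by omega⟩
    exact evenEngine3 h2S3 w v hwv k₀ (k₀ + 2) α (α + 1) hα (by omega) (Or.inl rfl)
  · have hcS : φ u + 1 = 4 * φ c := by
      have h1 := congrArg φ hc
      rwa [map_add, map_one, map_mul, map_ofNat] at h1
    have h3 : w ^ 3 = 1 := by
      have hcube : w ^ 3 = 1 + (φ u + 1) * ((w - 1) * w) := by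
        linear_combination (w - 1) * hw
      rw [hcS, h4S] at hcube
      rw [hcube]; ring
    have h6 : w ^ 6 = 1 := by
      have hx : w ^ 6 = (w ^ 3) ^ 2 := by ring
      rw [hx, h3, one_pow]
    rcases hN with ⟨d, hd⟩ | ⟨d, hd⟩
    · rw [hd, pow_mul w 6 d, h6, one_pow, sub_self, zero_mul]
    · rw [hd, pow_mul w 6 d, h6, one_pow, sub_self, mul_zero]
  · have hcS : φ u - 1 = 4 * φ c := by
      have h1 := congrArg φ hc
      rwa [map_sub, map_one, map_mul, map_ofNat] at h1
    have h3 : w ^ 3 = -1 := by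
      have hcube : w ^ 3 = -1 + (φ u - 1) * ((w + 1) * w) := by
        linear_combination (w + 1) * hw
      rw [hcS, h4S] at hcube
      rw [hcube]; ring
    have h6 : w ^ 6 = 1 := by
      have hx : w ^ 6 = (w ^ 3) ^ 2 := by ring
      rw [hx, h3]; ring
    rcases hN with ⟨d, hd⟩ | ⟨d, hd⟩
    · rw [hd, pow_mul w 6 d, h6, one_pow, sub_self, zero_mul]
    · rw [hd, pow_mul w 6 d, h6, one_pow, sub_self, mul_zero]

lemma bwd1 (k₀ : ℕ) (hN : 3 ∣ k₀ ∨ 3 ∣ k₀ + 2) (u : ZMod (2 ^ 1)) :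
    eval u (dickson 1 1 (k₀ + 1)) = u := by
  haveI : NeZero ((2:ℕ) ^ 1) := ⟨by norm_num⟩
  haveI := fact_one_lt 1 (by omega)
  rw [eval_dickson_iff]
  set φ := algebraMap (ZMod (2 ^ 1)) (AdjoinRoot (qpoly u)) with hφ
  set w := AdjoinRoot.root (qpoly u) with hwdef
  have hw : w ^ 2 = φ u * w - 1 := qpoly_root_eq u
  have h2S : (2 : AdjoinRoot (qpoly u)) = 0 := by
    have h1 := char_fact u 1 rfl
    linear_combination h1
  have h4S : (4 : AdjoinRoot (qpoly u)) = 0 := by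
    have h1 : (4 : AdjoinRoot (qpoly u)) = 2 * 2 := by norm_num
    rw [h1, h2S, zero_mul]
  rcases zmod_cases u with ⟨y, hy⟩ | ⟨c, hc⟩ | ⟨c, hc⟩
  · set v := φ y with hv
    have hyu : φ u = 2 * v := by
      have h1 := congrArg φ hy
      rwa [map_mul, map_ofNat] at h1
    have hw2 : w ^ 2 = 1 := by
      rw [hyu] at hw
      linear_combination hw + (v * w - 1) * h2S
    rcases Nat.even_or_odd k₀ with ⟨a, ha⟩ | ⟨a, ha⟩
    · have hf : w ^ k₀ = 1 := by
        rw [show k₀ = 2 * a by omega, pow_mul w 2 a, hw2, one_pow]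
      rw [hf, sub_self, zero_mul]
    · have hf1 : w ^ k₀ = w := by
        rw [show k₀ = 2 * a + 1 by omega, pow_add w (2*a) 1, pow_mul w 2 a, hw2]
        ring
      have hf2 : w ^ (k₀ + 2) = w := by
        rw [show k₀ + 2 = 2 * (a + 1) + 1 by omega, pow_add w (2*(a+1)) 1,
          pow_mul w 2 (a+1), hw2]
        ring
      rw [hf1, hf2]
      linear_combination hw2 + (1 - w) * h2S
  · have hcS : φ u + 1 = 4 * φ c := by
      have h1 := congrArg φ hc
      rwa [map_add, map_one, map_mul, map_ofNat] at h1
    have h3 : w ^ 3 = 1 := by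
      have hcube : w ^ 3 = 1 + (φ u + 1) * ((w - 1) * w) := by
        linear_combination (w - 1) * hw
      rw [hcS, h4S] at hcube
      rw [hcube]; ring
    rcases hN with ⟨d, hd⟩ | ⟨d, hd⟩
    · rw [hd, pow_mul w 3 d, h3, one_pow, sub_self, zero_mul]
    · rw [hd, pow_mul w 3 d, h3, one_pow, sub_self, mul_zero]
  · have hcS : φ u - 1 = 4 * φ c := by
      have h1 := congrArg φ hc
      rwa [map_sub, map_one, map_mul, map_ofNat] at h1
    have h3 : w ^ 3 = 1 := by
      have hcube : w ^ 3 = -1 + (φ u - 1) * ((w + 1) * w) := by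
        linear_combination (w + 1) * hw
      rw [hcS, h4S] at hcube
      linear_combination hcube - h2S
    rcases hN with ⟨d, hd⟩ | ⟨d, hd⟩
    · rw [hd, pow_mul w 3 d, h3, one_pow, sub_self, zero_mul]
    · rw [hd, pow_mul w 3 d, h3, one_pow, sub_self, mul_zero]

end SmallE

section Translate

lemma modeq_of_dvd' {N k : ℕ} (hk : 0 < k) (h : N ∣ k - 1 ∨ N ∣ k + 1) :
    (k:ℤ) ≡ 1 [ZMOD (N:ℕ)] ∨ (k:ℤ) ≡ -1 [ZMOD (N:ℕ)] := by
  rcases h with ⟨d, hd⟩ | ⟨d, hd⟩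
  · left
    rw [Int.modEq_iff_dvd]
    refine ⟨-(d:ℤ), ?_⟩
    have h1 : ((k - 1 : ℕ) : ℤ) = (k:ℤ) - 1 := by
      rw [Nat.cast_sub hk]; norm_num
    have h2 : ((k - 1 : ℕ) : ℤ) = (N:ℤ) * d := by exact_mod_cast congrArg (Nat.cast : ℕ → ℤ) hd
    have h3 : (k:ℤ) - 1 = (N:ℤ) * d := by rw [← h1]; exact h2
    linear_combination -h3
  · right
    rw [Int.modEq_iff_dvd]
    refine ⟨-(d:ℤ), ?_⟩
    have h2 : ((k + 1 : ℕ) : ℤ) = (N:ℤ) * d := by exact_mod_cast congrArg (Nat.cast : ℕ → ℤ) hd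
    push_cast at h2
    linear_combination -h2

lemma dvd_of_modeq' {N k : ℕ} (hk : 0 < k)
    (h : (k:ℤ) ≡ 1 [ZMOD (N:ℕ)] ∨ (k:ℤ) ≡ -1 [ZMOD (N:ℕ)]) :
    N ∣ k - 1 ∨ N ∣ k + 1 := by
  rcases h with h | h
  · left
    obtain ⟨d, hd⟩ := Int.modEq_iff_dvd.mp h
    have h1 : ((k - 1 : ℕ) : ℤ) = (N:ℤ) * (-d) := by
      rw [Nat.cast_sub hk]
      push_cast
      linear_combination -hd
    exact Int.natCast_dvd_natCast.mp ⟨-d, h1⟩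
  · right
    obtain ⟨d, hd⟩ := Int.modEq_iff_dvd.mp h
    have h1 : ((k + 1 : ℕ) : ℤ) = (N:ℤ) * (-d) := by
      push_cast
      linear_combination -hd
    exact Int.natCast_dvd_natCast.mp ⟨-d, h1⟩

end Translate

theorem dickson_identity_iff_pm_one_two_pow (e : ℕ) (he : 1 ≤ e) (k : ℕ) (hk : 0 < k) :
    (e < 3 → Nat.gcd k (3 * 2 ^ (e - 1)) = 1 →
      ((∀ u : ZMod (2 ^ e), Polynomial.eval u (Polynomial.dickson 1 1 k) = u) ↔
        ((k : ℤ) ≡ 1 [ZMOD (3 * 2 ^ (e - 1) : ℕ)] ∨ (k : ℤ) ≡ -1 [ZMOD (3 * 2 ^ (e - 1) : ℕ)]))) ∧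
    (3 ≤ e → Nat.gcd k (3 * 2 ^ (e - 2)) = 1 →
      ((∀ u : ZMod (2 ^ e), Polynomial.eval u (Polynomial.dickson 1 1 k) = u) ↔
        ((k : ℤ) ≡ 1 [ZMOD (3 * 2 ^ (e - 2) : ℕ)] ∨ (k : ℤ) ≡ -1 [ZMOD (3 * 2 ^ (e - 2) : ℕ)]))) := by
  obtain ⟨k₀, rfl⟩ : ∃ k₀, k = k₀ + 1 := ⟨k - 1, by omega⟩
  constructor
  · intro he3 hgcd
    have h3k : ¬ (3:ℕ) ∣ (k₀ + 1) := by
      intro hd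
      have h31 : (3:ℕ) ∣ 1 := by
        rw [← hgcd]
        exact Nat.dvd_gcd hd ⟨2 ^ (e - 1), rfl⟩
      norm_num at h31
    interval_cases e
    · have hmod : (3 * 2 ^ (1 - 1) : ℕ) = 3 := by norm_num
      rw [hmod]
      constructor
      · intro _
        apply modeq_of_dvd' hk
        rw [Nat.add_sub_cancel]
        omega
      · intro h
        have hN := dvd_of_modeq' hk h
        rw [Nat.add_sub_cancel] at hN
        intro u
        exact bwd1 k₀ hN u
    · have hmod : (3 * 2 ^ (2 - 1) : ℕ) = 6 := by norm_num
      rw [hmod] at hgcd ⊢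
      have h2k : ¬ (2:ℕ) ∣ (k₀ + 1) := by
        intro hd
        have h21 : (2:ℕ) ∣ 1 := by
          rw [← hgcd]
          exact Nat.dvd_gcd hd ⟨3, by norm_num⟩
        norm_num at h21
      constructor
      · intro _
        apply modeq_of_dvd' hk
        rw [Nat.add_sub_cancel]
        have hmod6 : k₀ % 6 = 0 ∨ k₀ % 6 = 4 := by omega
        rcases hmod6 with h | h
        · left; omega
        · right; omega
      · intro h
        have hN := dvd_of_modeq' hk h
        rw [Nat.add_sub_cancel] at hN
        intro u
        exact bwd2 k₀ hN u
  · intro he3 hgcd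
    obtain ⟨e₀, rfl⟩ : ∃ e₀, e = e₀ + 3 := ⟨e - 3, by omega⟩
    have hE : e₀ + 3 - 2 = e₀ + 1 := by omega
    rw [hE] at hgcd ⊢
    have h3k : ¬ (3:ℕ) ∣ (k₀ + 1) := by
      intro hd
      have h31 : (3:ℕ) ∣ 1 := by
        rw [← hgcd]
        exact Nat.dvd_gcd hd ⟨2 ^ (e₀ + 1), rfl⟩
      norm_num at h31
    constructor
    · intro H
      apply modeq_of_dvd' hk
      rw [Nat.add_sub_cancel]
      exact fwd3 e₀ k₀ h3k (H 3)
    · intro h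
      have hN := dvd_of_modeq' hk h
      rw [Nat.add_sub_cancel] at hN
      intro u
      exact bwd3 e₀ k₀ hN u
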